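/- If G is connected with finite diameter, then there is a constant K such that sup_v |f(v)| ≤ K·‖f‖_{μ,1} for all f in the Sobolev-style space H¹(μ), where ‖f‖²_{μ,1} = Σ_v f(v)²μ(v) + B(f,f); consequently Cauchy sequences in H¹(μ) converge uniformly, and the unit ball of H¹(μ) is uniformly equicontinuous. -/

import Mathlib

open UniformSpace Filter Topology
open scoped ENNReal

noncomputable section

/-- A locally finite edge-weighted (resistance) graph. -/
structure WGraph (V : Type*) where
  Adj : V → V → Prop
  symm : ∀ u v, Adj u v → Adj v u
  loopless : ∀ v, ¬ Adj v v
  R : V → V → ℝ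
  Rsymm : ∀ u v, R u v = R v u
  Rpos : ∀ u v, Adj u v → 0 < R u v
  locFin : ∀ v, {u | Adj u v}.Finite

namespace WGraph

variable {V : Type*} (G : WGraph V)

/-- The set of edges, as unordered pairs of vertices. -/
def edgeSet : Set (Sym2 V) := {e | ∃ u v, G.Adj u v ∧ e = s(u, v)}

/-- The set of total lengths of finite paths joining `u` to `v`. -/
def pathLengths (u v : V) : Set ℝ :=
  {L | ∃ (n : ℕ) (p : ℕ → V), p 0 = u ∧ p n = v ∧
        (∀ k < n, G.Adj (p k) (p (k + 1))) ∧
        L = ∑ k ∈ Finset.range n, G.R (p k) (p (k + 1))}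

/-- `G` is connected: any two vertices are joined by a finite path. -/
def Connected : Prop := ∀ u v : V, (G.pathLengths u v).Nonempty

/-- The metric on the vertex set is the minimal resistance path metric of `G`. -/
def IsPathMetric [MetricSpace V] : Prop :=
  ∀ u v : V, dist u v = sInf (G.pathLengths u v)

/-- Eventually flat functions: the values differ across only finitely many edges. -/
def EventuallyFlat (φ : V → ℝ) : Prop :=
  {p : V × V | G.Adj p.1 p.2 ∧ φ p.1 ≠ φ p.2}.Finite

open Classical in
/-- The conductance: the reciprocal resistance on edges, `0` off edges. -/
def cond (u v : V) : ℝ := if G.Adj u v then (G.R u v)⁻¹ else 0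

/-- `f` is harmonic at `v`: its value is the conductance-weighted average of the
values at the adjacent vertices. -/
def HarmonicAt (f : V → ℝ) (v : V) : Prop :=
  f v = (∑ u ∈ (G.locFin v).toFinset, G.cond u v)⁻¹ *
          ∑ u ∈ (G.locFin v).toFinset, G.cond u v * f u

/-- The weighted `ℓ²(μ)` inner product. -/
def winner (μ : V → ℝ) (f g : V → ℝ) : ℝ := ∑' v, f v * g v * μ v

/-- The bilinear (energy) form associated to conductances `C`. -/
def Bform (C : V → V → ℝ) (f g : V → ℝ) : ℝ :=
  (1 / 2) * ∑' p : V × V, C p.1 p.2 * (f p.1 - f p.2) * (g p.1 - g p.2)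

/-- The formal Laplacian `Δ_μ`. -/
def lap (C : V → V → ℝ) (μ : V → ℝ) (f : V → ℝ) (v : V) : ℝ :=
  (1 / μ v) * ∑' u, C u v * (f v - f u)

/-- The (possibly infinite) energy of `f`. -/
def energy (C : V → V → ℝ) (f : V → ℝ) : ℝ≥0∞ :=
  (1 / 2) * ∑' p : V × V, ENNReal.ofReal (C p.1 p.2 * (f p.1 - f p.2) ^ 2)

variable [MetricSpace V]

/-- A path in the completion `Ḡ` joining `x` and `y`: a two-sided sequence of
vertices (stationary steps are allowed, so this encodes finite paths, rays and
double rays) converging to `x` and `y` at its two ends. -/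
structure CPath (x y : Completion V) where
  p : ℤ → V
  step : ∀ k, p k = p (k + 1) ∨ G.Adj (p k) (p (k + 1))
  tendsto_left : Tendsto (fun n : ℕ => ((p (-(n : ℤ)) : V) : Completion V)) atTop (nhds x)
  tendsto_right : Tendsto (fun n : ℕ => ((p (n : ℤ) : V) : Completion V)) atTop (nhds y)

end WGraph

/-- The path `γ` uses (contains) the edge `e`. -/
def WGraph.CPath.uses {V : Type*} [MetricSpace V] {G : WGraph V}
    {x y : Completion V} (γ : G.CPath x y) (e : Sym2 V) : Prop :=
  ∃ k : ℤ, γ.p k ≠ γ.p (k + 1) ∧ e = s(γ.p k, γ.p (k + 1))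

namespace WGraph

variable {V : Type*} (G : WGraph V) [MetricSpace V]

/-- The completion `Ḡ` is weakly connected: any two distinct points admit a
finite set of edges met by every path joining them. -/
def WeaklyConnected : Prop :=
  ∀ x y : Completion V, x ≠ y →
    ∃ W : Set (Sym2 V), W.Finite ∧ W ⊆ G.edgeSet ∧
      ∀ γ : G.CPath x y, ∃ e ∈ W, γ.uses e

end WGraph


section Helpers

variable {V : Type*}

lemma WGraph.cond_nonneg (G : WGraph V) (u v : V) : 0 ≤ G.cond u v := by
  unfold WGraph.cond
  split
  · exact (inv_pos.2 (G.Rpos u v ‹_›)).le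
  · exact le_refl 0

lemma WGraph.energy_term_nonneg (G : WGraph V) (f : V → ℝ) (q : V × V) :
    0 ≤ G.cond q.1 q.2 * (f q.1 - f q.2) ^ 2 :=
  mul_nonneg (G.cond_nonneg _ _) (sq_nonneg _)

lemma WGraph.sum_pairs_le (G : WGraph V) (f : V → ℝ)
    (hE : WGraph.energy G.cond f ≠ ⊤) (F : Finset (V × V)) :
    ∑ q ∈ F, G.cond q.1 q.2 * (f q.1 - f q.2) ^ 2
      ≤ 2 * (WGraph.energy G.cond f).toReal := by
  set T : ℝ≥0∞ := ∑' p : V × V, ENNReal.ofReal (G.cond p.1 p.2 * (f p.1 - f p.2) ^ 2) with hT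
  have hED : WGraph.energy G.cond f = (1 / 2) * T := rfl
  have hTne : T ≠ ⊤ := by
    intro h
    apply hE
    rw [hED, h, ENNReal.mul_top]
    norm_num
  have h2T : (2 : ℝ≥0∞) * WGraph.energy G.cond f = T := by
    rw [hED, ← mul_assoc, one_div, ENNReal.mul_inv_cancel two_ne_zero ENNReal.ofNat_ne_top, one_mul]
  have hsum : (∑ q ∈ F, ENNReal.ofReal (G.cond q.1 q.2 * (f q.1 - f q.2) ^ 2)) ≤ T :=
    ENNReal.sum_le_tsum F
  have hmono := ENNReal.toReal_mono hTne hsum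
  have hl : (∑ q ∈ F, ENNReal.ofReal (G.cond q.1 q.2 * (f q.1 - f q.2) ^ 2)).toReal
      = ∑ q ∈ F, G.cond q.1 q.2 * (f q.1 - f q.2) ^ 2 := by
    rw [ENNReal.toReal_sum (fun q _ => ENNReal.ofReal_ne_top)]
    exact Finset.sum_congr rfl fun q _ => ENNReal.toReal_ofReal (G.energy_term_nonneg f q)
  have hr : T.toReal = 2 * (WGraph.energy G.cond f).toReal := by
    rw [← h2T, ENNReal.toReal_mul]
    norm_num
  rw [hl, hr] at hmono
  exact hmono

lemma WGraph.path_sq_le (G : WGraph V) (f : V → ℝ) (hE : WGraph.energy G.cond f ≠ ⊤) :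
    ∀ n : ℕ, ∀ p : ℕ → V, (∀ k < n, G.Adj (p k) (p (k + 1))) →
      (f (p n) - f (p 0)) ^ 2
        ≤ 2 * (WGraph.energy G.cond f).toReal * ∑ k ∈ Finset.range n, G.R (p k) (p (k + 1)) := by
  classical
  intro n
  induction n using Nat.strong_induction_on with
  | _ n ih =>
  intro p hp
  have hEnn : (0 : ℝ) ≤ (WGraph.energy G.cond f).toReal := ENNReal.toReal_nonneg
  have hRpos : ∀ k < n, 0 < G.R (p k) (p (k + 1)) := fun k hk => G.Rpos _ _ (hp k hk)
  have hLnn : 0 ≤ ∑ k ∈ Finset.range n, G.R (p k) (p (k + 1)) :=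
    Finset.sum_nonneg fun k hk => (hRpos k (Finset.mem_range.1 hk)).le
  by_cases h0 : f (p n) = f (p 0)
  · rw [h0, sub_self]
    simpa using mul_nonneg (mul_nonneg (by norm_num : (0:ℝ) ≤ 2) hEnn) hLnn
  by_cases hrep : ∃ i j, i < j ∧ j ≤ n ∧ j - i < n ∧ p i = p j
  · obtain ⟨i, j, hij, hjn, hlt, hpij⟩ := hrep
    set d := j - i with hd
    have hd1 : 0 < d := by omega
    have hidj : i + d = j := by omega
    set m := n - d with hm
    have him : i ≤ m := by omega
    have hmn : m < n := by omega
    have hmd : m + d = n := by omega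
    set φ : ℕ → ℕ := fun k => if k < i then k else k + d with hφ
    set q : ℕ → V := fun k => p (φ k) with hq
    have hq0 : q 0 = p 0 := by
      by_cases hi : 0 < i
      · simp [hq, hφ, hi]
      · have hi0 : i = 0 := by omega
        have h1 : q 0 = p d := by simp [hq, hφ, hi0]
        have hdj : d = j := by omega
        rw [h1, hdj, ← hpij, hi0]
    have hqm : q m = p n := by
      have : ¬ m < i := by omega
      simp only [hq, hφ, if_neg this]
      congr 1 <;> omega
    have hqk : ∀ k < i, q k = p k := by
      intro k hk; simp [hq, hφ, hk]
    have hadjq : ∀ k < m, G.Adj (q k) (q (k + 1)) := by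
      intro k hk
      by_cases hki : k < i
      · have hqk' : q k = p k := hqk k hki
        have hq1 : q (k + 1) = p (k + 1) := by
          by_cases h1 : k + 1 < i
          · exact hqk (k + 1) h1
          · have hk1 : k + 1 = i := by omega
            have h2 : q (k + 1) = p (k + 1 + d) := by simp [hq, hφ, h1]
            rw [h2, hk1, hidj, ← hpij]
        rw [hqk', hq1]
        exact hp k (by omega)
      · have h1 : ¬ k + 1 < i := by omega
        have e1 : q k = p (k + d) := by simp [hq, hφ, hki]
        have e2 : q (k + 1) = p (k + d + 1) := by
          simp only [hq, hφ, if_neg h1]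
          congr 1
          omega
        rw [e1, e2]
        exact hp (k + d) (by omega)
    have hterm : ∀ k < m, G.R (q k) (q (k + 1)) = G.R (p (φ k)) (p (φ k + 1)) := by
      intro k hk
      by_cases hki : k < i
      · have hqk' : q k = p k := hqk k hki
        have hq1 : q (k + 1) = p (k + 1) := by
          by_cases h1 : k + 1 < i
          · exact hqk (k + 1) h1
          · have hk1 : k + 1 = i := by omega
            have h2 : q (k + 1) = p (k + 1 + d) := by simp [hq, hφ, h1]
            rw [h2, hk1, hidj, ← hpij]
        rw [hqk', hq1]
        simp [hφ, hki]
      · have h1 : ¬ k + 1 < i := by omega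
        have e1 : q k = p (k + d) := by simp [hq, hφ, hki]
        have e2 : q (k + 1) = p (k + d + 1) := by
          simp only [hq, hφ, if_neg h1]
          congr 1
          omega
        rw [e1, e2]
        simp [hφ, hki]
    have hmono : StrictMono φ := by
      intro a b hab
      simp only [hφ]
      split <;> split <;> omega
    have hsumle : ∑ k ∈ Finset.range m, G.R (q k) (q (k + 1))
        ≤ ∑ k ∈ Finset.range n, G.R (p k) (p (k + 1)) := by
      have h1 : ∑ k ∈ Finset.range m, G.R (q k) (q (k + 1))
          = ∑ k ∈ Finset.range m, G.R (p (φ k)) (p (φ k + 1)) :=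
        Finset.sum_congr rfl fun k hk => hterm k (Finset.mem_range.1 hk)
      have h2 : ∑ k ∈ Finset.range m, G.R (p (φ k)) (p (φ k + 1))
          = ∑ t ∈ (Finset.range m).image φ, G.R (p t) (p (t + 1)) :=
        (Finset.sum_image (f := fun t => G.R (p t) (p (t + 1)))
          (fun a _ b _ hab => hmono.injective hab)).symm
      rw [h1, h2]
      apply Finset.sum_le_sum_of_subset_of_nonneg
      · intro t ht
        obtain ⟨k, hk, rfl⟩ := Finset.mem_image.1 ht
        have hk' : k < m := Finset.mem_range.1 hk
        have : φ k < n := by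
          simp only [hφ]
          split <;> omega
        exact Finset.mem_range.2 this
      · intro t ht _
        exact (G.Rpos _ _ (hp t (Finset.mem_range.1 ht))).le
    have hih := ih m hmn q hadjq
    rw [hqm, hq0] at hih
    calc (f (p n) - f (p 0)) ^ 2
        ≤ 2 * (WGraph.energy G.cond f).toReal * ∑ k ∈ Finset.range m, G.R (q k) (q (k + 1)) := hih
      _ ≤ 2 * (WGraph.energy G.cond f).toReal * ∑ k ∈ Finset.range n, G.R (p k) (p (k + 1)) :=
          mul_le_mul_of_nonneg_left hsumle (by linarith)
  · -- no repeats: the path is injective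
    push_neg at hrep
    have hinj : ∀ a ≤ n, ∀ b ≤ n, p a = p b → a = b := by
      have key : ∀ a b, a < b → b ≤ n → p a ≠ p b := by
        intro a b hab hbn hpe
        by_cases hlt : b - a < n
        · exact hrep a b hab hbn hlt hpe
        · have ha0 : a = 0 ∧ b = n := by omega
          exact h0 (by rw [← ha0.1, ← ha0.2, hpe])
      intro a ha b hb hpe
      rcases lt_trichotomy a b with h | h | h
      · exact absurd hpe (key a b h hb)
      · exact h
      · exact absurd hpe.symm (key b a h ha)
    have htel : f (p n) - f (p 0) = ∑ k ∈ Finset.range n, (f (p (k + 1)) - f (p k)) :=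
      (Finset.sum_range_sub (fun k => f (p k)) n).symm
    have hcs : (∑ k ∈ Finset.range n, (f (p (k + 1)) - f (p k))) ^ 2
        ≤ (∑ k ∈ Finset.range n, G.R (p k) (p (k + 1)))
          * ∑ k ∈ Finset.range n, G.cond (p k) (p (k + 1)) * (f (p k) - f (p (k + 1))) ^ 2 := by
      have hCS := Finset.sum_mul_sq_le_sq_mul_sq (Finset.range n)
        (fun k => Real.sqrt (G.R (p k) (p (k + 1))))
        (fun k => (f (p (k + 1)) - f (p k)) / Real.sqrt (G.R (p k) (p (k + 1))))
      have e1 : ∑ k ∈ Finset.range n, Real.sqrt (G.R (p k) (p (k + 1)))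
          * ((f (p (k + 1)) - f (p k)) / Real.sqrt (G.R (p k) (p (k + 1))))
          = ∑ k ∈ Finset.range n, (f (p (k + 1)) - f (p k)) := by
        refine Finset.sum_congr rfl fun k hk => ?_
        have hr : 0 < G.R (p k) (p (k + 1)) := hRpos k (Finset.mem_range.1 hk)
        have hs : Real.sqrt (G.R (p k) (p (k + 1))) ≠ 0 := by positivity
        rw [mul_comm, div_mul_cancel₀ _ hs]
      have e2 : ∑ k ∈ Finset.range n, (Real.sqrt (G.R (p k) (p (k + 1)))) ^ 2
          = ∑ k ∈ Finset.range n, G.R (p k) (p (k + 1)) := by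
        refine Finset.sum_congr rfl fun k hk => ?_
        exact Real.sq_sqrt (hRpos k (Finset.mem_range.1 hk)).le
      have e3 : ∑ k ∈ Finset.range n,
            ((f (p (k + 1)) - f (p k)) / Real.sqrt (G.R (p k) (p (k + 1)))) ^ 2
          = ∑ k ∈ Finset.range n, G.cond (p k) (p (k + 1)) * (f (p k) - f (p (k + 1))) ^ 2 := by
        refine Finset.sum_congr rfl fun k hk => ?_
        have hk' : k < n := Finset.mem_range.1 hk
        have hr : 0 < G.R (p k) (p (k + 1)) := hRpos k hk'
        have hc : G.cond (p k) (p (k + 1)) = (G.R (p k) (p (k + 1)))⁻¹ := by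
          unfold WGraph.cond
          rw [if_pos (hp k hk')]
        rw [div_pow, Real.sq_sqrt hr.le, hc, div_eq_inv_mul]
        congr 1
        ring
      rw [e1] at hCS
      rw [e2, e3] at hCS
      exact hCS
    have himg : ∑ k ∈ Finset.range n, G.cond (p k) (p (k + 1)) * (f (p k) - f (p (k + 1))) ^ 2
        = ∑ q ∈ (Finset.range n).image (fun k => ((p k, p (k + 1)) : V × V)),
            G.cond q.1 q.2 * (f q.1 - f q.2) ^ 2 := by
      refine (Finset.sum_image (f := fun q : V × V => G.cond q.1 q.2 * (f q.1 - f q.2) ^ 2)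
        (g := fun k => ((p k, p (k + 1)) : V × V)) ?_).symm
      intro a ha b hb hab
      have h1 : p a = p b := (Prod.ext_iff.1 hab).1
      exact hinj a (Nat.le_of_lt (Finset.mem_range.1 ha)) b (Nat.le_of_lt (Finset.mem_range.1 hb)) h1
    have hS : ∑ k ∈ Finset.range n, G.cond (p k) (p (k + 1)) * (f (p k) - f (p (k + 1))) ^ 2
        ≤ 2 * (WGraph.energy G.cond f).toReal := by
      rw [himg]
      exact G.sum_pairs_le f hE _
    calc (f (p n) - f (p 0)) ^ 2
        = (∑ k ∈ Finset.range n, (f (p (k + 1)) - f (p k))) ^ 2 := by rw [← htel]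
      _ ≤ (∑ k ∈ Finset.range n, G.R (p k) (p (k + 1)))
            * ∑ k ∈ Finset.range n, G.cond (p k) (p (k + 1)) * (f (p k) - f (p (k + 1))) ^ 2 := hcs
      _ ≤ (∑ k ∈ Finset.range n, G.R (p k) (p (k + 1))) * (2 * (WGraph.energy G.cond f).toReal) :=
            mul_le_mul_of_nonneg_left hS hLnn
      _ = 2 * (WGraph.energy G.cond f).toReal * ∑ k ∈ Finset.range n, G.R (p k) (p (k + 1)) := by ring

lemma WGraph.sq_le_two_energy_dist [MetricSpace V] (G : WGraph V)
    (hmet : G.IsPathMetric) (hconn : G.Connected) (f : V → ℝ)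
    (hE : WGraph.energy G.cond f ≠ ⊤) (u v : V) :
    (f u - f v) ^ 2 ≤ 2 * (WGraph.energy G.cond f).toReal * dist u v := by
  obtain ⟨L₀, hL₀⟩ := hconn u v
  set E := (WGraph.energy G.cond f).toReal with hEdef
  have hEnn : (0 : ℝ) ≤ E := ENNReal.toReal_nonneg
  have hall : ∀ L ∈ G.pathLengths u v, (f u - f v) ^ 2 ≤ 2 * E * L := by
    rintro L ⟨n, p, h0, hn, hadj, rfl⟩
    have h := G.path_sq_le f hE n p hadj
    rw [h0, hn] at h
    calc (f u - f v) ^ 2 = (f v - f u) ^ 2 := by ring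
      _ ≤ _ := h
  rcases hEnn.eq_or_lt with hE0 | hE0
  · have h1 := hall L₀ hL₀
    rw [← hE0] at h1 ⊢
    simp only [mul_zero, zero_mul] at h1 ⊢
    exact h1
  · have hlb : (f u - f v) ^ 2 / (2 * E) ≤ sInf (G.pathLengths u v) := by
      apply le_csInf ⟨L₀, hL₀⟩
      intro L hL
      rw [div_le_iff₀ (by linarith)]
      calc (f u - f v) ^ 2 ≤ 2 * E * L := hall L hL
        _ = L * (2 * E) := by ring
    rw [← hmet u v] at hlb
    have := (div_le_iff₀ (by linarith : (0:ℝ) < 2 * E)).1 hlb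
    linarith
end Helpers


/-- on a connected graph of finite diameter, evaluation is
bounded by the `H¹(μ)` norm, and the unit ball of `H¹(μ)` is uniformly
equicontinuous. -/
theorem h1_sup_bound {V : Type*} [MetricSpace V] [Countable V]
    (G : WGraph V) (hmet : G.IsPathMetric) (hconn : G.Connected)
    (μ : V → ℝ) (hμ : ∀ v, 0 < μ v)
    (D : ℝ) (hD : ∀ u v : V, dist u v ≤ D) :
    (∃ K : ℝ, ∀ f : V → ℝ, (Summable fun v => f v ^ 2 * μ v) →
      WGraph.energy G.cond f ≠ ⊤ → ∀ v : V,
        |f v| ≤ K * Real.sqrt ((∑' v, f v ^ 2 * μ v) + (WGraph.energy G.cond f).toReal)) ∧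
    (∀ ε > (0 : ℝ), ∃ δ > (0 : ℝ), ∀ f : V → ℝ,
      (Summable fun v => f v ^ 2 * μ v) → WGraph.energy G.cond f ≠ ⊤ →
      (∑' v, f v ^ 2 * μ v) + (WGraph.energy G.cond f).toReal ≤ 1 →
      ∀ u v : V, dist u v < δ → |f u - f v| < ε) := by
  constructor
  · -- sup bound
    rcases isEmpty_or_nonempty V with hV | hV
    · exact ⟨0, fun f _ _ v => (IsEmpty.false v).elim⟩
    obtain ⟨v₀⟩ := hV
    refine ⟨Real.sqrt (2 / μ v₀ + 4 * D), ?_⟩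
    intro f hS hE v
    set S := ∑' w, f w ^ 2 * μ w with hSdef
    set E := (WGraph.energy G.cond f).toReal with hEdef
    have hEnn : (0 : ℝ) ≤ E := ENNReal.toReal_nonneg
    have hSnn : (0 : ℝ) ≤ S := tsum_nonneg fun w => mul_nonneg (sq_nonneg _) (hμ w).le
    have hD0 : (0 : ℝ) ≤ D := le_trans dist_nonneg (hD v₀ v₀)
    have hv₀ : f v₀ ^ 2 * μ v₀ ≤ S :=
      hS.le_tsum v₀ fun b _ => mul_nonneg (sq_nonneg _) (hμ b).le
    have h1 : f v₀ ^ 2 ≤ S / μ v₀ := (le_div_iff₀ (hμ v₀)).2 hv₀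
    have h2 : (f v - f v₀) ^ 2 ≤ 2 * E * dist v v₀ :=
      G.sq_le_two_energy_dist hmet hconn f hE v v₀
    have h3 : dist v v₀ ≤ D := hD v v₀
    have hd : (0:ℝ) ≤ dist v v₀ := dist_nonneg
    have hμ0 : 0 < μ v₀ := hμ v₀
    have h5 : f v ^ 2 ≤ (2 / μ v₀ + 4 * D) * (S + E) := by
      have hsq : (0:ℝ) ≤ ((f v - f v₀) - f v₀) ^ 2 := sq_nonneg _
      have hc1 : 2 * E * dist v v₀ ≤ 2 * E * D :=
        mul_le_mul_of_nonneg_left h3 (by linarith)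
      have hc2 : (0:ℝ) ≤ 2 / μ v₀ := by positivity
      have key : f v ^ 2 ≤ 2 * (S / μ v₀) + 4 * E * D := by nlinarith [hsq, h1, h2, hc1]
      have e : (2 / μ v₀ + 4 * D) * (S + E)
          = 2 * (S / μ v₀) + (2 / μ v₀) * E + 4 * D * S + 4 * D * E := by ring
      have hn1 : 0 ≤ (2 / μ v₀) * E := mul_nonneg hc2 hEnn
      have hn2 : 0 ≤ 4 * D * S := by positivity
      nlinarith [key, hn1, hn2]
    calc |f v| = Real.sqrt (f v ^ 2) := (Real.sqrt_sq_eq_abs _).symm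
      _ ≤ Real.sqrt ((2 / μ v₀ + 4 * D) * (S + E)) := Real.sqrt_le_sqrt h5
      _ = Real.sqrt (2 / μ v₀ + 4 * D) * Real.sqrt (S + E) :=
          Real.sqrt_mul (by positivity) _
  · -- equicontinuity
    intro ε hε
    refine ⟨ε ^ 2 / 2, by positivity, ?_⟩
    intro f hS hE hnorm u v hd
    set S := ∑' w, f w ^ 2 * μ w with hSdef
    set E := (WGraph.energy G.cond f).toReal with hEdef
    have hEnn : (0 : ℝ) ≤ E := ENNReal.toReal_nonneg
    have hSnn : (0 : ℝ) ≤ S := tsum_nonneg fun w => mul_nonneg (sq_nonneg _) (hμ w).le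
    have hE1 : E ≤ 1 := by linarith
    have h2 : (f u - f v) ^ 2 ≤ 2 * E * dist u v :=
      G.sq_le_two_energy_dist hmet hconn f hE u v
    have hdn : (0:ℝ) ≤ dist u v := dist_nonneg
    have hlt : (f u - f v) ^ 2 < ε ^ 2 := by nlinarith [mul_nonneg (sub_nonneg.2 hE1) hdn]
    calc |f u - f v| = Real.sqrt ((f u - f v) ^ 2) := (Real.sqrt_sq_eq_abs _).symm
      _ < Real.sqrt (ε ^ 2) := Real.sqrt_lt_sqrt (sq_nonneg _) hlt
      _ = ε := Real.sqrt_sq hε.le
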